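/- In the abstract optimal-control framework, assume the continuous optimality system holds for (ȳ, p̄, w̄, q̄, ū), the auxiliary solutions (ŷ, p̂), (ŵ, q̂), ũ, (ỹ, p̃), (w̃, q̃) exist, and η_y ≥ ‖ŷ − ȳ_T‖_V, η_w ≥ ‖ŵ − w̄_T‖_V, η_u = ‖ũ − ū_T‖. Then, with μ := 4/θ², ‖ȳ − ȳ_T‖_V² ≤ 2(2 μ C_Ω⁸ + 1) η_y² + 2 μ C_Ω⁴ η_w² + 2 C_Ω² (2 + 2 μ C_Ω⁸) η_u². -/

import Mathlib

open scoped RealInnerProductSpace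

private lemma coercive_est {V H : Type*}
    [NormedAddCommGroup V] [InnerProductSpace ℝ V]
    [NormedAddCommGroup H] [InnerProductSpace ℝ H]
    (ι : V →ₗ[ℝ] H) (CΩ : ℝ) (hCΩ : 0 ≤ CΩ)
    (hι : ∀ ξ : V, ‖ι ξ‖ ≤ CΩ * ‖ξ‖)
    (d : V) (g : H) (hkey : ⟪g, ι d⟫ = ‖d‖ ^ 2)
    (c : ℝ) (hc : 0 ≤ c) (hg : ‖g‖ ≤ c) :
    ‖d‖ ≤ CΩ * c := by
  have h1 : ‖d‖ ^ 2 ≤ c * (CΩ * ‖d‖) := by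
    calc ‖d‖ ^ 2 = ⟪g, ι d⟫ := hkey.symm
      _ ≤ ‖g‖ * ‖ι d‖ := real_inner_le_norm g (ι d)
      _ ≤ c * (CΩ * ‖d‖) := mul_le_mul hg (hι d) (norm_nonneg _) hc
  rcases eq_or_lt_of_le (norm_nonneg d) with h | h
  · rw [← h]; positivity
  · nlinarith [h1, h]
set_option maxHeartbeats 1000000 in
/-- Step 2 of the global reliability analysis: the state error bound
`‖ȳ − ȳ_T‖_V² ≤ 2(2μC_Ω⁸ + 1) η_y² + 2μC_Ω⁴ η_w² + 2C_Ω²(2 + 2μC_Ω⁸) η_u²`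
with `μ = 4/θ²`. -/
theorem stmt_11
    {V Q H : Type*}
    [NormedAddCommGroup V] [InnerProductSpace ℝ V] [CompleteSpace V]
    [NormedAddCommGroup Q] [InnerProductSpace ℝ Q] [CompleteSpace Q]
    [NormedAddCommGroup H] [InnerProductSpace ℝ H] [CompleteSpace H]
    (ι : V →ₗ[ℝ] H) (CΩ : ℝ) (hCΩ : 0 < CΩ)
    (hι : ∀ ξ : V, ‖ι ξ‖ ≤ CΩ * ‖ξ‖)
    (A Cb : V →ₗ[ℝ] V →ₗ[ℝ] ℝ) (B : V →ₗ[ℝ] Q →ₗ[ℝ] ℝ)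
    (hAC : ∀ ξ ζ : V, A ξ ζ = Cb ζ ξ)
    (hAco : ∀ ξ : V, A ξ ξ = ‖ξ‖ ^ 2)
    (Cct : ℝ) (hCct : 0 < Cct)
    (hAct : ∀ ξ ζ : V, |A ξ ζ| ≤ Cct * ‖ξ‖ * ‖ζ‖)
    (Uad : Set H) (hUne : Uad.Nonempty) (hUconv : Convex ℝ Uad)
    (θ : ℝ) (hθ : 0 < θ) (f yΩ : H)
    -- the continuous optimality system
    (ybar : V) (pbar : Q) (wbar : V) (qbar : Q) (ubar : H) (hubar : ubar ∈ Uad)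
    (hst : ∀ ξ : V, A ybar ξ - B ξ pbar = ⟪f + ubar, ι ξ⟫)
    (hydiv : ∀ φ : Q, B ybar φ = 0)
    (had : ∀ ζ : V, Cb wbar ζ + B ζ qbar = ⟪ι ybar - yΩ, ι ζ⟫)
    (hwdiv : ∀ φ : Q, B wbar φ = 0)
    (hvi : ∀ u ∈ Uad, 0 ≤ ⟪ι wbar + θ • ubar, u - ubar⟫)
    -- the (arbitrary) discrete approximation
    (yT : V) (pT : Q) (wT : V) (qT : Q) (uT : H) (huT : uT ∈ Uad)
    -- auxiliary solution (ŷ, p̂)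
    (yhat : V) (phat : Q)
    (hsthat : ∀ ξ : V, A yhat ξ - B ξ phat = ⟪f + uT, ι ξ⟫)
    (hyhatdiv : ∀ φ : Q, B yhat φ = 0)
    -- auxiliary solution (ŵ, q̂)
    (what : V) (qhat : Q)
    (hadhat : ∀ ζ : V, Cb what ζ + B ζ qhat = ⟪ι yT - yΩ, ι ζ⟫)
    (hwhatdiv : ∀ φ : Q, B what φ = 0)
    -- auxiliary control ũ
    (utilde : H) (hutilde : utilde ∈ Uad)
    (hvitilde : ∀ u ∈ Uad, 0 ≤ ⟪ι wT + θ • utilde, u - utilde⟫)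
    -- auxiliary solution (ỹ, p̃)
    (ytilde : V) (ptilde : Q)
    (hsttilde : ∀ ξ : V, A ytilde ξ - B ξ ptilde = ⟪f + utilde, ι ξ⟫)
    (hytildediv : ∀ φ : Q, B ytilde φ = 0)
    -- auxiliary solution (w̃, q̃)
    (wtilde : V) (qtilde : Q)
    (hadtilde : ∀ ζ : V, Cb wtilde ζ + B ζ qtilde = ⟪ι ytilde - yΩ, ι ζ⟫)
    (hwtildediv : ∀ φ : Q, B wtilde φ = 0)
    -- error estimators
    (ηy ηw ηu : ℝ)
    (hηy : ‖yhat - yT‖ ≤ ηy) (hηw : ‖what - wT‖ ≤ ηw)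
    (hηu : ηu = ‖utilde - uT‖)
    (μ : ℝ) (hμ : μ = 4 / θ ^ 2) :
    ‖ybar - yT‖ ^ 2 ≤
      2 * (2 * μ * CΩ ^ 8 + 1) * ηy ^ 2 + 2 * μ * CΩ ^ 4 * ηw ^ 2 +
        2 * CΩ ^ 2 * (2 + 2 * μ * CΩ ^ 8) * ηu ^ 2 := by

  -- nonnegativity facts
  have hηy0 : 0 ≤ ηy := le_trans (norm_nonneg _) hηy
  have hηw0 : 0 ≤ ηw := le_trans (norm_nonneg _) hηw
  have hηu0 : 0 ≤ ηu := hηu ▸ norm_nonneg _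
  set a := ‖ubar - utilde‖ with ha_def
  have ha0 : 0 ≤ a := norm_nonneg _
  -- generic state-equation difference identity
  have stdiff : ∀ (y1 y2 : V) (p1 p2 : Q) (u1 u2 : H),
      (∀ ξ : V, A y1 ξ - B ξ p1 = ⟪f + u1, ι ξ⟫) →
      (∀ ξ : V, A y2 ξ - B ξ p2 = ⟪f + u2, ι ξ⟫) →
      ∀ ξ : V, (∀ φ : Q, B ξ φ = 0) →
      A (y1 - y2) ξ = ⟪u1 - u2, ι ξ⟫ := by
    intro y1 y2 p1 p2 u1 u2 e1 e2 ξ hξ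
    have h1 := e1 ξ
    have h2 := e2 ξ
    have hb1 := hξ p1
    have hb2 := hξ p2
    have hA : A (y1 - y2) ξ = A y1 ξ - A y2 ξ := by
      rw [map_sub, LinearMap.sub_apply]
    have hin : ⟪u1 - u2, ι ξ⟫ = ⟪f + u1, ι ξ⟫ - ⟪f + u2, ι ξ⟫ := by
      rw [inner_sub_left, inner_add_left, inner_add_left]; ring
    rw [hA, hin]; linarith
  -- generic adjoint-equation difference identity
  have addiff : ∀ (w1 w2 : V) (q1 q2 : Q) (z1 z2 : V),
      (∀ ζ : V, Cb w1 ζ + B ζ q1 = ⟪ι z1 - yΩ, ι ζ⟫) →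
      (∀ ζ : V, Cb w2 ζ + B ζ q2 = ⟪ι z2 - yΩ, ι ζ⟫) →
      ∀ ζ : V, (∀ φ : Q, B ζ φ = 0) →
      Cb (w1 - w2) ζ = ⟪ι (z1 - z2), ι ζ⟫ := by
    intro w1 w2 q1 q2 z1 z2 e1 e2 ζ hζ
    have h1 := e1 ζ
    have h2 := e2 ζ
    have hb1 := hζ q1
    have hb2 := hζ q2
    have hC : Cb (w1 - w2) ζ = Cb w1 ζ - Cb w2 ζ := by
      rw [map_sub, LinearMap.sub_apply]
    have hin : ⟪ι (z1 - z2), ι ζ⟫ = ⟪ι z1 - yΩ, ι ζ⟫ - ⟪ι z2 - yΩ, ι ζ⟫ := by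
      rw [map_sub, inner_sub_left, inner_sub_left, inner_sub_left]; ring
    rw [hC, hin]; linarith
  -- kernel-of-B facts for differences
  have hker : ∀ (v1 v2 : V), (∀ φ : Q, B v1 φ = 0) → (∀ φ : Q, B v2 φ = 0) →
      ∀ φ : Q, B (v1 - v2) φ = 0 := by
    intro v1 v2 hv1 hv2 φ
    rw [map_sub, LinearMap.sub_apply, hv1, hv2, sub_zero]
  -- generic state estimate
  have stest : ∀ (y1 y2 : V) (p1 p2 : Q) (u1 u2 : H),
      (∀ ξ : V, A y1 ξ - B ξ p1 = ⟪f + u1, ι ξ⟫) →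
      (∀ ξ : V, A y2 ξ - B ξ p2 = ⟪f + u2, ι ξ⟫) →
      (∀ φ : Q, B y1 φ = 0) → (∀ φ : Q, B y2 φ = 0) →
      ‖y1 - y2‖ ≤ CΩ * ‖u1 - u2‖ := by
    intro y1 y2 p1 p2 u1 u2 e1 e2 d1 d2
    have hkey : ⟪u1 - u2, ι (y1 - y2)⟫ = ‖y1 - y2‖ ^ 2 := by
      rw [← stdiff y1 y2 p1 p2 u1 u2 e1 e2 (y1 - y2) (hker y1 y2 d1 d2)]
      exact hAco (y1 - y2)
    exact coercive_est ι CΩ hCΩ.le hι _ _ hkey _ (norm_nonneg _) le_rfl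
  -- generic adjoint estimate
  have adest : ∀ (w1 w2 : V) (q1 q2 : Q) (z1 z2 : V),
      (∀ ζ : V, Cb w1 ζ + B ζ q1 = ⟪ι z1 - yΩ, ι ζ⟫) →
      (∀ ζ : V, Cb w2 ζ + B ζ q2 = ⟪ι z2 - yΩ, ι ζ⟫) →
      (∀ φ : Q, B w1 φ = 0) → (∀ φ : Q, B w2 φ = 0) →
      ‖w1 - w2‖ ≤ CΩ ^ 2 * ‖z1 - z2‖ := by
    intro w1 w2 q1 q2 z1 z2 e1 e2 d1 d2
    have hkey : ⟪ι (z1 - z2), ι (w1 - w2)⟫ = ‖w1 - w2‖ ^ 2 := by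
      rw [← addiff w1 w2 q1 q2 z1 z2 e1 e2 (w1 - w2) (hker w1 w2 d1 d2),
        ← hAC (w1 - w2) (w1 - w2)]
      exact hAco (w1 - w2)
    have h := coercive_est ι CΩ hCΩ.le hι _ _ hkey (CΩ * ‖z1 - z2‖)
      (by positivity) (hι (z1 - z2))
    calc ‖w1 - w2‖ ≤ CΩ * (CΩ * ‖z1 - z2‖) := h
      _ = CΩ ^ 2 * ‖z1 - z2‖ := by ring
  -- the three concrete estimates
  have h1 : ‖ybar - yhat‖ ≤ CΩ * ‖ubar - uT‖ :=
    stest ybar yhat pbar phat ubar uT hst hsthat hydiv hyhatdiv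
  have h2 : ‖ytilde - yhat‖ ≤ CΩ * ηu := by
    rw [hηu]; exact stest ytilde yhat ptilde phat utilde uT hsttilde hsthat hytildediv hyhatdiv
  have h4 : ‖wtilde - what‖ ≤ CΩ ^ 2 * ‖ytilde - yT‖ :=
    adest wtilde what qtilde qhat ytilde yT hadtilde hadhat hwtildediv hwhatdiv
  -- sign condition from the coupled system
  have hsign : 0 ≤ ⟪ubar - utilde, ι (wbar - wtilde)⟫ := by
    have e1 : A (ybar - ytilde) (wbar - wtilde) = ⟪ubar - utilde, ι (wbar - wtilde)⟫ :=
      stdiff ybar ytilde pbar ptilde ubar utilde hst hsttilde (wbar - wtilde)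
        (hker wbar wtilde hwdiv hwtildediv)
    have e2 : Cb (wbar - wtilde) (ybar - ytilde) = ⟪ι (ybar - ytilde), ι (ybar - ytilde)⟫ :=
      addiff wbar wtilde qbar qtilde ybar ytilde had hadtilde (ybar - ytilde)
        (hker ybar ytilde hydiv hytildediv)
    rw [← e1, hAC, e2]
    exact real_inner_self_nonneg
  -- variational inequalities combination
  have hθa : θ * a ^ 2 ≤ CΩ * ‖wtilde - wT‖ * a := by
    have s1 := hvi utilde hutilde
    have s2 := hvitilde ubar hubar
    rw [inner_add_left, real_inner_smul_left] at s1 s2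
    have id1 : ⟪ubar, utilde - ubar⟫ + ⟪utilde, ubar - utilde⟫ = -(a ^ 2) := by
      have hs : ⟪ubar - utilde, ubar - utilde⟫ = a ^ 2 := real_inner_self_eq_norm_sq _
      have hc := real_inner_comm ubar utilde
      simp only [inner_sub_left, inner_sub_right] at hs ⊢
      linarith
    have id1' : θ * ⟪ubar, utilde - ubar⟫ + θ * ⟪utilde, ubar - utilde⟫ = -(θ * a ^ 2) := by
      rw [← mul_add, id1]; ring
    have id2 : ⟪ι wbar, utilde - ubar⟫ + ⟪ι wT, ubar - utilde⟫
        = ⟪ubar - utilde, ι (wbar - wtilde)⟫ * (-1) + ⟪ι wtilde - ι wT, utilde - ubar⟫ := by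
      have hc1 := real_inner_comm (ubar - utilde) (ι (wbar - wtilde))
      rw [← hc1, map_sub]
      simp only [inner_sub_left, inner_sub_right]
      ring
    have hcs : ⟪ι wtilde - ι wT, utilde - ubar⟫ ≤ CΩ * ‖wtilde - wT‖ * a := by
      calc ⟪ι wtilde - ι wT, utilde - ubar⟫ ≤ ‖ι wtilde - ι wT‖ * ‖utilde - ubar‖ :=
            real_inner_le_norm _ _
        _ = ‖ι (wtilde - wT)‖ * a := by rw [ha_def, ← map_sub, norm_sub_rev utilde ubar]
        _ ≤ CΩ * ‖wtilde - wT‖ * a := mul_le_mul_of_nonneg_right (hι _) ha0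
    linarith [s1, s2, id1', id2, hcs, hsign]
  have hθa1 : θ * a ≤ CΩ * ‖wtilde - wT‖ := by
    rcases eq_or_lt_of_le ha0 with h | h
    · rw [← h, mul_zero]; positivity
    · have := hθa
      have h' : θ * a * a ≤ CΩ * ‖wtilde - wT‖ * a := by nlinarith
      exact le_of_mul_le_mul_right h' h
  -- triangle inequality chains
  have t2 : ‖ytilde - yT‖ ≤ CΩ * ηu + ηy := by
    calc ‖ytilde - yT‖ ≤ ‖ytilde - yhat‖ + ‖yhat - yT‖ := norm_sub_le_norm_sub_add_norm_sub _ _ _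
      _ ≤ CΩ * ηu + ηy := add_le_add h2 hηy
  have w1 : ‖wtilde - wT‖ ≤ CΩ ^ 2 * (CΩ * ηu + ηy) + ηw := by
    calc ‖wtilde - wT‖ ≤ ‖wtilde - what‖ + ‖what - wT‖ := norm_sub_le_norm_sub_add_norm_sub _ _ _
      _ ≤ CΩ ^ 2 * ‖ytilde - yT‖ + ηw := add_le_add h4 hηw
      _ ≤ CΩ ^ 2 * (CΩ * ηu + ηy) + ηw :=
          add_le_add (mul_le_mul_of_nonneg_left t2 (by positivity)) le_rfl
  have hθa2 : θ * a ≤ CΩ ^ 4 * ηu + CΩ ^ 3 * ηy + CΩ * ηw := by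
    have := mul_le_mul_of_nonneg_left w1 hCΩ.le
    nlinarith [hθa1]
  have hN : ‖ybar - yT‖ ≤ CΩ * a + CΩ * ηu + ηy := by
    have tu : ‖ubar - uT‖ ≤ a + ηu := by
      calc ‖ubar - uT‖ ≤ ‖ubar - utilde‖ + ‖utilde - uT‖ := norm_sub_le_norm_sub_add_norm_sub _ _ _
        _ = a + ηu := by rw [hηu]
    have h1' : ‖ybar - yhat‖ ≤ CΩ * (a + ηu) :=
      le_trans h1 (mul_le_mul_of_nonneg_left tu hCΩ.le)
    calc ‖ybar - yT‖ ≤ ‖ybar - yhat‖ + ‖yhat - yT‖ := norm_sub_le_norm_sub_add_norm_sub _ _ _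
      _ ≤ CΩ * (a + ηu) + ηy := add_le_add h1' hηy
      _ = CΩ * a + CΩ * ηu + ηy := by ring
  -- final arithmetic
  have hθ2 : (0 : ℝ) < θ ^ 2 := by positivity
  have hS2 : (θ * a) ^ 2 ≤ (CΩ ^ 4 * ηu + CΩ ^ 3 * ηy + CΩ * ηw) ^ 2 :=
    pow_le_pow_left₀ (by positivity) hθa2 2
  have ha2 : θ ^ 2 * a ^ 2 ≤ 4 * CΩ ^ 8 * ηu ^ 2 + 4 * CΩ ^ 6 * ηy ^ 2 + 2 * CΩ ^ 2 * ηw ^ 2 := by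
    nlinarith [hS2, sq_nonneg (CΩ ^ 4 * ηu - CΩ ^ 3 * ηy),
      sq_nonneg (CΩ ^ 4 * ηu + CΩ ^ 3 * ηy - CΩ * ηw)]
  have hN2 : ‖ybar - yT‖ ^ 2 ≤ 4 * CΩ ^ 2 * a ^ 2 + 4 * CΩ ^ 2 * ηu ^ 2 + 2 * ηy ^ 2 := by
    have := pow_le_pow_left₀ (norm_nonneg (ybar - yT)) hN 2
    nlinarith [this, sq_nonneg (CΩ * a - CΩ * ηu), sq_nonneg (CΩ * a + CΩ * ηu - ηy)]
  have ha2' : a ^ 2 ≤ μ * CΩ ^ 8 * ηu ^ 2 + μ * CΩ ^ 6 * ηy ^ 2 + μ / 2 * CΩ ^ 2 * ηw ^ 2 := by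
    have key : θ ^ 2 * a ^ 2
        ≤ θ ^ 2 * (μ * CΩ ^ 8 * ηu ^ 2 + μ * CΩ ^ 6 * ηy ^ 2 + μ / 2 * CΩ ^ 2 * ηw ^ 2) := by
      have hexp : θ ^ 2 * (μ * CΩ ^ 8 * ηu ^ 2 + μ * CΩ ^ 6 * ηy ^ 2 + μ / 2 * CΩ ^ 2 * ηw ^ 2)
          = 4 * CΩ ^ 8 * ηu ^ 2 + 4 * CΩ ^ 6 * ηy ^ 2 + 2 * CΩ ^ 2 * ηw ^ 2 := by
        rw [hμ]; field_simp; ring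
      rw [hexp]; exact ha2
    exact le_of_mul_le_mul_left key hθ2
  have hfin := mul_le_mul_of_nonneg_left ha2' (show (0:ℝ) ≤ 4 * CΩ ^ 2 by positivity)
  linarith [hN2, hfin]
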